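/- Let n ≥ 4 be an integer and set c = n/2 (as a real number). Let p and p' be real numbers with 0 < p ≤ 1 and 0 < p' ≤ p/2048. If (1 − p/c)^{n−1} ≥ 0.89, then (1 − p'/c)^{n−1} ≥ 0.89^{1/1024}. -/
import Mathlib

lemma exp_neg_two_le (t : ℝ) (h0 : 0 ≤ t) (h1 : t ≤ 1/2) :
    Real.exp (-(2*t)) ≤ 1 - t := by
  have h2 : (1 + t)^2 ≤ Real.exp (2*t) := by
    have := Real.add_one_le_exp t
    calc (1 + t)^2 ≤ (Real.exp t)^2 := by
          apply pow_le_pow_left₀ (by linarith) (by linarith)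
      _ = Real.exp (2*t) := by rw [sq, ← Real.exp_add]; ring_nf
  have key : 1 ≤ (1 - t) * (1 + t)^2 := by nlinarith [mul_nonneg h0 (by linarith : (0:ℝ) ≤ 1/2 - t), mul_nonneg (mul_nonneg h0 h0) (by linarith : (0:ℝ) ≤ 1/2 - t)]
  have hmul : Real.exp (-(2*t)) * Real.exp (2*t) = 1 := by
    rw [← Real.exp_add]; simp
  nlinarith [Real.exp_pos (2*t), Real.exp_pos (-(2*t))]

theorem stmt_11 (n : ℕ) (hn : 4 ≤ n) (c : ℝ) (hc : c = (n : ℝ) / 2)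
    (p p' : ℝ) (hp0 : 0 < p) (hp1 : p ≤ 1) (hp'0 : 0 < p') (hp' : p' ≤ p / 2048)
    (h : 0.89 ≤ (1 - p / c) ^ (n - 1)) :
    (0.89 : ℝ) ^ ((1 : ℝ) / 1024) ≤ (1 - p' / c) ^ (n - 1) := by
  have hn4 : (4:ℝ) ≤ (n:ℝ) := by exact_mod_cast hn
  have hc2 : (2:ℝ) ≤ c := by rw [hc]; linarith
  have hcpos : (0:ℝ) < c := by linarith
  set x := p / c with hx
  set t := p' / c with ht
  have hx0 : 0 < x := div_pos hp0 hcpos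
  have hxhalf : x ≤ 1/2 := by
    rw [hx, div_le_iff₀ hcpos]; linarith
  have ht0 : 0 < t := div_pos hp'0 hcpos
  have htx : t ≤ x / 2048 := by
    calc t = p' / c := ht
      _ ≤ (p/2048) / c := by gcongr
      _ = x / 2048 := by rw [hx]; ring
  set m := n - 1 with hm
  have hm3 : 3 ≤ m := by omega
  have hmR : (3:ℝ) ≤ (m:ℝ) := by exact_mod_cast hm3
  -- Step A: m * x ≤ - log 0.89
  have hA : (m:ℝ) * x ≤ - Real.log 0.89 := by
    have h1x : (0:ℝ) ≤ 1 - x := by linarith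
    have hle : (1 - x)^m ≤ Real.exp (-(m*x)) := by
      calc (1 - x)^m ≤ (Real.exp (-x))^m :=
            pow_le_pow_left₀ h1x (by linarith [Real.add_one_le_exp (-x)]) m
        _ = Real.exp (-(m*x)) := by
            rw [← Real.exp_nat_mul]; ring_nf
    have h89 : (0.89:ℝ) ≤ Real.exp (-(m*x)) := le_trans h hle
    have := Real.log_le_log (by norm_num) h89
    rw [Real.log_exp] at this
    linarith
  -- Step B
  have hB : Real.exp (-(2*((m:ℝ)*t))) ≤ (1 - t)^m := by
    have htb : t ≤ 1/2 := by linarith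
    have := exp_neg_two_le t ht0.le htb
    calc Real.exp (-(2*((m:ℝ)*t))) = (Real.exp (-(2*t)))^m := by
          rw [← Real.exp_nat_mul]; ring_nf
      _ ≤ (1 - t)^m := pow_le_pow_left₀ (Real.exp_pos _).le this m
  have hlog89 : Real.log 0.89 < 0 := Real.log_neg (by norm_num) (by norm_num)
  have hC : Real.log 0.89 * (1/1024) ≤ -(2*((m:ℝ)*t)) := by
    have : 2*((m:ℝ)*t) ≤ (m:ℝ)*x/1024 := by
      have := mul_le_mul_of_nonneg_left htx (by positivity : (0:ℝ) ≤ (m:ℝ))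
      nlinarith
    nlinarith
  have hrw : (0.89:ℝ) ^ ((1:ℝ)/1024) = Real.exp (Real.log 0.89 * (1/1024)) := by
    rw [Real.rpow_def_of_pos (by norm_num)]
  rw [hrw]
  calc Real.exp (Real.log 0.89 * (1/1024)) ≤ Real.exp (-(2*((m:ℝ)*t))) :=
        Real.exp_le_exp.mpr hC
    _ ≤ (1 - t)^m := hB
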